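/- For all real numbers p > 0 and q > 0, ∫_0^1 (x^{p-1} - x^{q-1})/(1-x) dx = ψ(q) - ψ(p). -/

import Mathlib

open MeasureTheory Real intervalIntegral Set Filter Topology

/-- The digamma function `ψ(x) = Γ'(x)/Γ(x)`. -/
noncomputable def digamma (x : ℝ) : ℝ := deriv Real.Gamma x / Real.Gamma x

lemma gamma_ne_neg_nat {x : ℝ} (hx : 0 < x) : ∀ m : ℕ, x ≠ -m :=
  fun m => ((neg_nonpos.mpr (Nat.cast_nonneg m)).trans_lt hx).ne'

lemma hasDerivAt_Gamma' {x : ℝ} (hx : 0 < x) :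
    HasDerivAt Real.Gamma (deriv Real.Gamma x) x :=
  (Real.differentiableAt_Gamma (gamma_ne_neg_nat hx)).hasDerivAt

lemma digamma_add_one {x : ℝ} (hx : 0 < x) : digamma (x + 1) = digamma x + 1 / x := by
  have hne : Real.Gamma x ≠ 0 := (Real.Gamma_pos_of_pos hx).ne'
  have hG : HasDerivAt Real.Gamma (deriv Real.Gamma (x + 1)) (x + 1) :=
    hasDerivAt_Gamma' (by linarith)
  have h1 : HasDerivAt (fun y : ℝ => Real.Gamma (y + 1)) (deriv Real.Gamma (x + 1)) x := by
    simpa [Function.comp_def] using HasDerivAt.comp x hG ((hasDerivAt_id x).add_const 1)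
  have h2 : HasDerivAt (fun y : ℝ => y * Real.Gamma y)
      (Real.Gamma x + x * deriv Real.Gamma x) x := by
    simpa [add_comm, Pi.mul_def] using (hasDerivAt_id x).mul (hasDerivAt_Gamma' hx)
  have heq : (fun y : ℝ => y * Real.Gamma y) =ᶠ[nhds x] fun y => Real.Gamma (y + 1) := by
    filter_upwards [eventually_gt_nhds hx] with y hy
    rw [Real.Gamma_add_one hy.ne']
  have h3 : HasDerivAt (fun y : ℝ => Real.Gamma (y + 1))
      (Real.Gamma x + x * deriv Real.Gamma x) x := h2.congr_of_eventuallyEq heq.symm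
  have hd : deriv Real.Gamma (x + 1) = Real.Gamma x + x * deriv Real.Gamma x := h1.unique h3
  rw [digamma, digamma, hd, Real.Gamma_add_one hx.ne']
  field_simp
  ring

lemma digamma_add_nat {x : ℝ} (hx : 0 < x) (n : ℕ) :
    digamma (x + n) = digamma x + ∑ k ∈ Finset.range n, 1 / (x + k) := by
  induction n with
  | zero => simp
  | succ n ih =>
    have : x + (n + 1 : ℕ) = (x + n) + 1 := by push_cast; ring
    rw [this, digamma_add_one (by positivity), ih, Finset.sum_range_succ]
    ring

lemma digamma_mono {x y : ℝ} (hx : 0 < x) (hxy : x ≤ y) : digamma x ≤ digamma y := by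
  have hdiff : ∀ z ∈ Ioi (0:ℝ), DifferentiableAt ℝ (Real.log ∘ Real.Gamma) z := by
    intro z hz
    exact (Real.differentiableAt_log (Real.Gamma_pos_of_pos hz).ne').comp z
      (Real.differentiableAt_Gamma (gamma_ne_neg_nat hz))
  have hmono := Real.convexOn_log_Gamma.monotoneOn_deriv hdiff
  have hderiv : ∀ z ∈ Ioi (0:ℝ), deriv (Real.log ∘ Real.Gamma) z = digamma z := by
    intro z hz
    have := ((hasDerivAt_Gamma' hz).log (Real.Gamma_pos_of_pos hz).ne').deriv
    simpa [Function.comp_def, digamma] using this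
  have hy : 0 < y := lt_of_lt_of_le hx hxy
  have := hmono (mem_Ioi.mpr hx) (mem_Ioi.mpr hy) hxy
  rwa [hderiv x hx, hderiv y hy] at this

lemma tendsto_digamma_diff (p q : ℝ) (hp : 0 < p) (hpq : p ≤ q) :
    Tendsto (fun n : ℕ => digamma (q + n) - digamma (p + n)) atTop (𝓝 0) := by
  set m := ⌈q - p⌉₊ with hm
  have hqm : q ≤ p + m := by
    have := Nat.le_ceil (q - p); rw [← hm] at this; linarith
  have hlower : ∀ n : ℕ, 0 ≤ digamma (q + n) - digamma (p + n) := by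
    intro n
    have := digamma_mono (x := p + n) (y := q + (n:ℝ)) (by positivity) (by linarith)
    linarith
  have hupper : ∀ n : ℕ, digamma (q + n) - digamma (p + n) ≤ m * (1 / (p + n)) := by
    intro n
    have hq : 0 < q := hp.trans_le hpq
    have h1 : digamma (q + n) ≤ digamma ((p + n) + m) :=
      digamma_mono (by positivity) (by push_cast; linarith)
    have h2 : digamma ((p + n) + m)
        = digamma (p + n) + ∑ k ∈ Finset.range m, 1 / ((p + n) + k) :=
      digamma_add_nat (by positivity) m
    have h3 : ∑ k ∈ Finset.range m, 1 / ((p + (n:ℝ)) + k) ≤ m * (1 / (p + n)) := by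
      calc ∑ k ∈ Finset.range m, 1 / ((p + (n:ℝ)) + k)
          ≤ ∑ _k ∈ Finset.range m, 1 / (p + (n:ℝ)) := by
            refine Finset.sum_le_sum fun k _ => ?_
            exact one_div_le_one_div_of_le (by positivity) (le_add_of_nonneg_right (by positivity))
        _ = m * (1 / (p + n)) := by rw [Finset.sum_const, Finset.card_range, nsmul_eq_mul]
    linarith
  have hlim : Tendsto (fun n : ℕ => (m : ℝ) * (1 / (p + n))) atTop (𝓝 0) := by
    have h1 : Tendsto (fun n : ℕ => p + (n : ℝ)) atTop atTop :=
      tendsto_atTop_add_const_left _ p tendsto_natCast_atTop_atTop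
    have := (h1.inv_tendsto_atTop).const_mul (m : ℝ)
    simpa [one_div] using this
  exact squeeze_zero hlower hupper hlim

lemma summable_one_div_sub (p q : ℝ) (hp : 0 < p) (hq : 0 < q) (hpq : p ≤ q) :
    Summable (fun n : ℕ => 1 / (p + n) - 1 / (q + n)) := by
  rw [← summable_nat_add_iff 1]
  have hs : Summable (fun n : ℕ => (q - p) * (1 / ((n : ℝ) + 1) ^ 2)) := by
    have h0 : Summable (fun n : ℕ => 1 / (n : ℝ) ^ 2) :=
      Real.summable_one_div_nat_pow.mpr one_lt_two
    have h1 := (summable_nat_add_iff 1).mpr h0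
    exact (h1.congr (by intro n; push_cast; ring)).mul_left _
  refine Summable.of_nonneg_of_le (fun n => ?_) (fun n => ?_) hs
  · have h1 : q + ((n:ℝ) + 1) > 0 := by positivity
    have : 1 / (q + ((n:ℝ) + 1)) ≤ 1 / (p + ((n:ℝ) + 1)) :=
      one_div_le_one_div_of_le (by positivity) (by linarith)
    push_cast
    linarith
  · have h1 : (0:ℝ) < p + ((n:ℝ) + 1) := by positivity
    have h2 : (0:ℝ) < q + ((n:ℝ) + 1) := by positivity
    have key : 1 / (p + ((n:ℝ) + 1)) - 1 / (q + ((n:ℝ) + 1))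
        = (q - p) / ((p + ((n:ℝ) + 1)) * (q + ((n:ℝ) + 1))) := by
      rw [div_sub_div _ _ h1.ne' h2.ne']
      congr 1
      ring
    push_cast
    rw [key, mul_one_div]
    apply div_le_div_of_nonneg_left (by linarith) (by positivity)
    have hn1 : ((n:ℝ) + 1) ≤ p + ((n:ℝ) + 1) := by linarith
    have hn2 : ((n:ℝ) + 1) ≤ q + ((n:ℝ) + 1) := by linarith
    calc ((n:ℝ) + 1) ^ 2 = ((n:ℝ) + 1) * ((n:ℝ) + 1) := sq _
      _ ≤ (p + ((n:ℝ) + 1)) * (q + ((n:ℝ) + 1)) :=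
          mul_le_mul hn1 hn2 (by positivity) (by positivity)

lemma tsum_eq_digamma_sub (p q : ℝ) (hp : 0 < p) (hq : 0 < q) (hpq : p ≤ q) :
    ∑' n : ℕ, (1 / (p + n) - 1 / (q + n)) = digamma q - digamma p := by
  have hsum := summable_one_div_sub p q hp hq hpq
  have hps : ∀ n : ℕ, ∑ k ∈ Finset.range n, (1 / (p + k) - 1 / (q + k))
      = (digamma q - digamma p) + (digamma (p + n) - digamma (q + n)) := by
    intro n
    have h1 := digamma_add_nat hp n
    have h2 := digamma_add_nat hq n
    rw [Finset.sum_sub_distrib]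
    linarith
  have ht : Tendsto (fun n : ℕ => ∑ k ∈ Finset.range n, (1 / (p + k) - 1 / (q + k)))
      atTop (𝓝 (digamma q - digamma p)) := by
    simp_rw [hps]
    have := (tendsto_digamma_diff p q hp hpq).neg
    simpa using tendsto_const_nhds.add (by simpa [neg_sub] using this :
      Tendsto (fun n : ℕ => digamma (p + n) - digamma (q + n)) atTop (𝓝 0))
  exact tendsto_nhds_unique hsum.hasSum.tendsto_sum_nat ht

lemma integrableOn_rpow_Ioo {a : ℝ} (ha : -1 < a) :
    IntegrableOn (fun x : ℝ => x ^ a) (Ioo (0:ℝ) 1) := by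
  have h := intervalIntegral.intervalIntegrable_rpow' (a := 0) (b := 1) ha
  rw [intervalIntegrable_iff_integrableOn_Ioc_of_le zero_le_one] at h
  exact h.mono_set Ioo_subset_Ioc_self

lemma integral_rpow_Ioo {a : ℝ} (ha : -1 < a) :
    ∫ x in Ioo (0:ℝ) 1, x ^ a = 1 / (a + 1) := by
  rw [← MeasureTheory.integral_Ioc_eq_integral_Ioo,
    ← intervalIntegral.integral_of_le zero_le_one,
    integral_rpow (Or.inl ha)]
  rw [Real.one_rpow, Real.zero_rpow (by linarith)]
  ring

lemma key_integral (p q : ℝ) (hp : 0 < p) (hq : 0 < q) (hpq : p ≤ q) :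
    ∫ x in (0:ℝ)..1, (x ^ (p - 1) - x ^ (q - 1)) / (1 - x) = digamma q - digamma p := by
  set g : ℕ → ℝ → ℝ := fun n x => (x ^ (p - 1) - x ^ (q - 1)) * x ^ n with hg
  have hgeq : ∀ n : ℕ, ∀ x ∈ Ioo (0:ℝ) 1, g n x = x ^ (p - 1 + n) - x ^ (q - 1 + n) := by
    intro n x hx
    rw [hg]
    simp only
    rw [sub_mul, ← Real.rpow_natCast x n, ← Real.rpow_add hx.1, ← Real.rpow_add hx.1]
  have hint : ∀ n : ℕ, IntegrableOn (g n) (Ioo (0:ℝ) 1) := by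
    intro n
    have h1 : IntegrableOn (fun x : ℝ => x ^ (p - 1 + n) - x ^ (q - 1 + n)) (Ioo (0:ℝ) 1) :=
      (integrableOn_rpow_Ioo (by push_cast; linarith)).sub
        (integrableOn_rpow_Ioo (by push_cast; linarith))
    exact h1.congr_fun (fun x hx => (hgeq n x hx).symm) measurableSet_Ioo
  have hnonneg : ∀ n : ℕ, ∀ x ∈ Ioo (0:ℝ) 1, 0 ≤ g n x := by
    intro n x hx
    have := Real.rpow_le_rpow_of_exponent_ge hx.1 hx.2.le (by linarith : q - 1 ≥ p - 1)
    have hxn : (0:ℝ) ≤ x ^ n := pow_nonneg hx.1.le n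
    rw [hg]; exact mul_nonneg (by linarith) hxn
  have hval : ∀ n : ℕ, ∫ x in Ioo (0:ℝ) 1, g n x = 1 / (p + n) - 1 / (q + n) := by
    intro n
    rw [setIntegral_congr_fun measurableSet_Ioo (fun x hx => hgeq n x hx)]
    rw [MeasureTheory.integral_sub (integrableOn_rpow_Ioo (by push_cast; linarith))
      (integrableOn_rpow_Ioo (by push_cast; linarith))]
    rw [integral_rpow_Ioo (by push_cast; linarith), integral_rpow_Ioo (by push_cast; linarith),
      show p - 1 + (n:ℝ) + 1 = p + n by ring, show q - 1 + (n:ℝ) + 1 = q + n by ring]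
  have hnorm : ∀ n : ℕ, ∫ x in Ioo (0:ℝ) 1, ‖g n x‖ = 1 / (p + n) - 1 / (q + n) := by
    intro n
    rw [← hval n]
    refine setIntegral_congr_fun measurableSet_Ioo (fun x hx => ?_)
    exact Real.norm_of_nonneg (hnonneg n x hx)
  have hsum : Summable fun n : ℕ => ∫ x in Ioo (0:ℝ) 1, ‖g n x‖ := by
    rw [show (fun n : ℕ => ∫ x in Ioo (0:ℝ) 1, ‖g n x‖)
      = fun n : ℕ => 1 / (p + n) - 1 / (q + n) from funext hnorm]
    exact summable_one_div_sub p q hp hq hpq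
  have hswap := MeasureTheory.integral_tsum_of_summable_integral_norm
    (μ := volume.restrict (Ioo (0:ℝ) 1)) (F := g) hint hsum
  have hptw : ∫ x in Ioo (0:ℝ) 1, (x ^ (p - 1) - x ^ (q - 1)) / (1 - x)
      = ∫ x in Ioo (0:ℝ) 1, ∑' n : ℕ, g n x := by
    refine setIntegral_congr_fun measurableSet_Ioo (fun x hx => ?_)
    rw [hg]
    simp only
    rw [tsum_mul_left, tsum_geometric_of_lt_one hx.1.le hx.2, div_eq_mul_inv]
  rw [intervalIntegral.integral_of_le zero_le_one, MeasureTheory.integral_Ioc_eq_integral_Ioo,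
    hptw, ← hswap]
  rw [show (fun n : ℕ => ∫ x in Ioo (0:ℝ) 1, g n x)
    = fun n : ℕ => 1 / (p + n) - 1 / (q + n) from funext hval]
  exact tsum_eq_digamma_sub p q hp hq hpq

theorem integral_rpow_sub_rpow_div_one_sub (p q : ℝ) (hp : 0 < p) (hq : 0 < q) :
    ∫ x in (0 : ℝ)..1, (x ^ (p - 1) - x ^ (q - 1)) / (1 - x) = digamma q - digamma p := by
  rcases le_total p q with h | h
  · exact key_integral p q hp hq h
  · have h1 : ∀ x : ℝ, (x ^ (p - 1) - x ^ (q - 1)) / (1 - x)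
        = -((x ^ (q - 1) - x ^ (p - 1)) / (1 - x)) := fun x => by ring
    simp_rw [h1]
    rw [intervalIntegral.integral_neg, key_integral q p hq hp h]
    ring
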